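/- Consider the eight {0,1}-vectors in Fin 8 → Fin 5 → ℕ whose supports are: v1 = v2 = {1,2}, v3 = {1,3}, v4 = {2,3}, v5 = {3,4}, v6 = {3,5}, v7 = v8 = {4,5}; each vector has exactly two entries equal to 1. Then: (a) the pair partition M0 with blocks {1,2}, {3,5}, {4,6}, {7,8} has minimum cost (namely 10) among all pair partitions of Fin 8; (b) every second-phase partition of the blocks of M0 has induced cost at least 8; and (c) the minimum cost over all quad partitions is OPT = 6 (attained by the quads {1,2,3,4} and {5,6,7,8}). Hence the two-phase matching algorithm can output a solution of cost 8 = (4/3)·OPT on this instance of PQ(#1=2). -/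

import Mathlib

set_option maxRecDepth 10000


open Finset

/-- Cost of a block `B`: sum of componentwise maxima of the vectors indexed by `B`. -/
def blockCost {N n : ℕ} (v : Fin N → Fin n → ℕ) (B : Finset (Fin N)) : ℕ :=
  ∑ j : Fin n, B.sup fun i => v i j

/-- Cost of a partition of `Fin N`: sum of the costs of its blocks. -/
def partCost {N n : ℕ} (v : Fin N → Fin n → ℕ)
    (P : Finpartition (univ : Finset (Fin N))) : ℕ :=
  ∑ b ∈ P.parts, blockCost v b

/-- A pair partition: every block has size 2. -/
def IsPairPartition {N : ℕ} (P : Finpartition (univ : Finset (Fin N))) : Prop :=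
  ∀ b ∈ P.parts, b.card = 2

/-- A quad partition: every block has size 4. -/
def IsQuadPartition {N : ℕ} (P : Finpartition (univ : Finset (Fin N))) : Prop :=
  ∀ b ∈ P.parts, b.card = 4

/-- A second-phase partition: a partition of the blocks of `M` into pairs of blocks. -/
def IsSecondPhase {N : ℕ} (M : Finpartition (univ : Finset (Fin N)))
    (S : Finpartition M.parts) : Prop :=
  ∀ q ∈ S.parts, q.card = 2

/-- Induced cost of a second-phase partition: cost of the quad partition whose blocks
are the unions of the paired blocks. -/
def inducedCost {N n : ℕ} (v : Fin N → Fin n → ℕ)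
    (M : Finpartition (univ : Finset (Fin N))) (S : Finpartition M.parts) : ℕ :=
  ∑ q ∈ S.parts, blockCost v (q.sup id)

/-- The eight vectors of the bad instance of PQ(#1=2); supports (1-indexed):
{1,2}, {1,2}, {1,3}, {2,3}, {3,4}, {3,5}, {4,5}, {4,5}. -/
def badVec5 : Fin 8 → Fin 5 → ℕ :=
  ![![1, 1, 0, 0, 0], ![1, 1, 0, 0, 0], ![1, 0, 1, 0, 0], ![0, 1, 1, 0, 0],
    ![0, 0, 1, 1, 0], ![0, 0, 1, 0, 1], ![0, 0, 0, 1, 1], ![0, 0, 0, 1, 1]]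

/-- weights for the pair lower bound -/
def pqWeight : Fin 8 → ℕ := ![2, 2, 3, 3, 3, 3, 2, 2]

lemma pq_pair_lb : ∀ i j : Fin 8, i ≠ j →
    pqWeight i + pqWeight j ≤ 2 * blockCost badVec5 {i, j} := by decide

lemma pq_triple_lb : ∀ i j k : Fin 8, i ≠ j → i ≠ k → j ≠ k →
    3 ≤ blockCost badVec5 {i, j, k} := by decide

lemma pq_union_lb : ∀ b ∈ ({({0, 1} : Finset (Fin 8)), {2, 4}, {3, 5}, {6, 7}} :
      Finset (Finset (Fin 8))),
    ∀ b' ∈ ({({0, 1} : Finset (Fin 8)), {2, 4}, {3, 5}, {6, 7}} : Finset (Finset (Fin 8))),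
    b ≠ b' → 4 ≤ blockCost badVec5 (b ∪ b') := by decide

lemma blockCost_mono {N n : ℕ} (v : Fin N → Fin n → ℕ) {s t : Finset (Fin N)}
    (h : s ⊆ t) : blockCost v s ≤ blockCost v t :=
  Finset.sum_le_sum fun _ _ => Finset.sup_mono h

lemma sum_over_parts {N : ℕ} (P : Finpartition (univ : Finset (Fin N))) (g : Fin N → ℕ) :
    ∑ b ∈ P.parts, ∑ i ∈ b, g i = ∑ i, g i := by
  have : ∑ b ∈ P.parts, ∑ i ∈ id b, g i = ∑ i ∈ P.parts.biUnion id, g i :=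
    (Finset.sum_biUnion P.disjoint).symm
  simpa [← Finset.sup_eq_biUnion, P.sup_parts] using this

/-- On the instance `badVec5`, the first-phase matching with blocks
{1,2}, {3,5}, {4,6}, {7,8} (0-indexed: {0,1}, {2,4}, {3,5}, {6,7}) is a minimum-cost
pair partition of cost 10, every second-phase partition of its blocks has induced
cost at least 8, and the optimum quad-partition cost is 6, attained by the quads
{1,2,3,4} and {5,6,7,8} (0-indexed: {0,1,2,3} and {4,5,6,7}). -/
theorem pq2_lb_instance (M0 : Finpartition (univ : Finset (Fin 8)))
    (hM0 : M0.parts = {({0, 1} : Finset (Fin 8)), {2, 4}, {3, 5}, {6, 7}}) :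
    IsPairPartition M0 ∧ partCost badVec5 M0 = 10 ∧
    (∀ M' : Finpartition (univ : Finset (Fin 8)),
      IsPairPartition M' → partCost badVec5 M0 ≤ partCost badVec5 M') ∧
    (∀ S : Finpartition M0.parts, IsSecondPhase M0 S → 8 ≤ inducedCost badVec5 M0 S) ∧
    (∃ Q : Finpartition (univ : Finset (Fin 8)), IsQuadPartition Q ∧
      Q.parts = {({0, 1, 2, 3} : Finset (Fin 8)), {4, 5, 6, 7}} ∧
      partCost badVec5 Q = 6) ∧
    (∀ Q : Finpartition (univ : Finset (Fin 8)),
      IsQuadPartition Q → 6 ≤ partCost badVec5 Q) := by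
  have hcost10 : partCost badVec5 M0 = 10 := by
    rw [partCost, hM0]; decide
  refine ⟨?_, hcost10, ?_, ?_, ?_, ?_⟩
  · -- pair partition
    intro b hb
    rw [hM0] at hb
    fin_cases hb <;> decide
  · -- minimality among pair partitions
    intro M' hM'
    rw [hcost10]
    have key : 20 ≤ 2 * partCost badVec5 M' := by
      have h1 : (20 : ℕ) = ∑ i : Fin 8, pqWeight i := by decide
      rw [h1, ← sum_over_parts M' pqWeight, partCost, Finset.mul_sum]
      refine Finset.sum_le_sum fun b hb => ?_
      obtain ⟨i, j, hij, rfl⟩ := Finset.card_eq_two.mp (hM' b hb)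
      rw [Finset.sum_pair hij]
      exact pq_pair_lb i j hij
    omega
  · -- second phase lower bound
    intro S hS
    have hcard4 : M0.parts.card = 4 := by rw [hM0]; decide
    have hsum : ∑ q ∈ S.parts, q.card = 4 := by
      rw [S.sum_card_parts, hcard4]
    have hsum2 : ∑ q ∈ S.parts, q.card = 2 * S.parts.card := by
      rw [Finset.sum_congr rfl hS, Finset.sum_const, smul_eq_mul, mul_comm]
    have hSc : S.parts.card = 2 := by omega
    have hper : ∀ q ∈ S.parts, 4 ≤ blockCost badVec5 (q.sup id) := by
      intro q hq
      obtain ⟨b, b', hbb, rfl⟩ := Finset.card_eq_two.mp (hS q hq)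
      have hsub : ({b, b'} : Finset (Finset (Fin 8))) ⊆ M0.parts := S.le hq
      have hb : b ∈ M0.parts := hsub (by simp)
      have hb' : b' ∈ M0.parts := hsub (by simp)
      rw [hM0] at hb hb'
      have : ({b, b'} : Finset (Finset (Fin 8))).sup id = b ∪ b' := by
        simp [Finset.sup_insert, Finset.sup_singleton]
      rw [this]
      exact pq_union_lb b hb b' hb' hbb
    calc (8 : ℕ) = S.parts.card * 4 := by rw [hSc]
      _ = S.parts.card • 4 := (smul_eq_mul _ _).symm
      _ ≤ ∑ q ∈ S.parts, blockCost badVec5 (q.sup id) := Finset.card_nsmul_le_sum _ _ _ hper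
      _ = inducedCost badVec5 M0 S := rfl
  · -- optimal quad partition exists
    refine ⟨⟨{({0, 1, 2, 3} : Finset (Fin 8)), {4, 5, 6, 7}}, ?_, ?_, ?_⟩, ?_, rfl, ?_⟩
    · rw [Finset.supIndep_pair (by decide : ({0,1,2,3} : Finset (Fin 8)) ≠ {4,5,6,7})]
      decide
    · decide
    · decide
    · intro b hb; fin_cases hb <;> decide
    · rw [partCost]; decide
  · -- quad lower bound
    intro Q hQ
    have hsum : ∑ b ∈ Q.parts, b.card = 8 := by
      rw [Q.sum_card_parts]; decide
    have hsum2 : ∑ b ∈ Q.parts, b.card = 4 * Q.parts.card := by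
      rw [Finset.sum_congr rfl hQ, Finset.sum_const, smul_eq_mul, mul_comm]
    have hQc : Q.parts.card = 2 := by omega
    have hper : ∀ b ∈ Q.parts, 3 ≤ blockCost badVec5 b := by
      intro b hb
      obtain ⟨i, t, hit, rfl, hct⟩ := Finset.card_eq_succ.mp (hQ b hb)
      obtain ⟨j, u, hju, rfl, hcu⟩ := Finset.card_eq_succ.mp hct
      obtain ⟨k, l, hkl, rfl⟩ := Finset.card_eq_two.mp hcu
      have hij : i ≠ j := by rintro rfl; simp at hit
      have hik : i ≠ k := by rintro rfl; simp at hit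
      have hjk : j ≠ k := by rintro rfl; simp at hju
      refine le_trans (pq_triple_lb i j k hij hik hjk) (blockCost_mono _ ?_)
      intro x hx
      simp only [Finset.mem_insert, Finset.mem_singleton] at hx ⊢
      tauto
    calc (6 : ℕ) = Q.parts.card * 3 := by rw [hQc]
      _ = Q.parts.card • 3 := (smul_eq_mul _ _).symm
      _ ≤ ∑ b ∈ Q.parts, blockCost badVec5 b := Finset.card_nsmul_le_sum _ _ _ hper
      _ = partCost badVec5 Q := rfl
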